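/- Let k be a field of characteristic zero and V a finite-dimensional k-vector space with basis z₁,…,zₙ. The right-normed brackets [z_{i₁},[z_{i₂},…[z_{i_{d−1}}, z_{i_d}]…]] with i₁ ≥ i₂ ≥ … ≥ i_{d−1} < i_d and d ≥ 2 are linearly independent in the free Lie algebra FL(V). -/

import Mathlib

/-- The right-normed bracket `[z_{i₁},[z_{i₂},…[z_{i_{d−1}}, z_{i_d}]…]]` of
generators of the free Lie algebra indexed by a list. -/
noncomputable def rnBracket (k : Type*) [CommRing k] {X : Type*} :
    List X → FreeLieAlgebra k X
  | [] => 0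
  | [i] => FreeLieAlgebra.of k i
  | i :: l => ⁅FreeLieAlgebra.of k i, rnBracket k l⁆

/-- Index type for Reutenauer's generators: a degree `d + 2 ≥ 2` together with a
multi-index `i₁ ≥ i₂ ≥ … ≥ i_{d+1} < i_{d+2}` (weakly decreasing, with the last
step strictly increasing). -/
def ReutenauerIndex (n : ℕ) : Type :=
  Σ d : ℕ, {i : Fin (d + 2) → Fin n //
    (∀ j : Fin (d + 1), (j : ℕ) < d → i j.succ ≤ i j.castSucc) ∧
    i (Fin.castSucc (Fin.last d)) < i (Fin.last (d + 1))}

namespace Stmt19Aux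

open List

variable {X : Type*}

/-- All ways to split a list into a subsequence and its complement (order kept). -/
def splits : List X → List (List X × List X)
  | [] => [([], [])]
  | x :: u => (splits u).map (fun p => (x :: p.1, p.2)) ++ (splits u).map (fun p => (p.1, x :: p.2))

lemma splits_length : ∀ (u : List X), ∀ p ∈ splits u, p.1.length + p.2.length = u.length
  | [], p, hp => by simp [splits] at hp; simp [hp]
  | x :: u, p, hp => by
      simp only [splits, mem_append, mem_map] at hp
      rcases hp with ⟨q, hq, rfl⟩ | ⟨q, hq, rfl⟩ <;>
        simp only [length_cons] <;> have := splits_length u q hq <;> omega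

variable [LinearOrder X]

/-- The word associated to a split, with pivot letter `a`. -/
def sw (a : X) (p : List X × List X) : List X := p.1 ++ a :: p.2.reverse

/-- The leading word. -/
def mw (u : List X) (a : X) : List X :=
  u.takeWhile (fun x => a ≤ x) ++ a :: (u.dropWhile (fun x => a ≤ x)).reverse

lemma mem_le_head {l : List X} (hl : Chain' (fun a b => b ≤ a) l) {x} (hx : x ∈ l)
    (h : l ≠ []) : x ≤ l.head h := by
  haveI : IsTrans X (fun a b : X => b ≤ a) := ⟨fun _ _ _ h h' => le_trans h' h⟩
  rw [List.Chain', List.isChain_iff_pairwise] at hl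
  rcases l with _ | ⟨y, l⟩
  · exact absurd rfl h
  · rcases mem_cons.1 hx with rfl | hx
    · exact le_rfl
    · exact (pairwise_cons.1 hl).1 x hx

lemma lt_of_head_lt {l₁ l₂ : List X} (h₁ : l₁ ≠ []) (h₂ : l₂ ≠ [])
    (h : l₁.head h₁ < l₂.head h₂) : l₁ < l₂ := by
  rcases l₁ with _ | ⟨a, l₁⟩; · exact absurd rfl h₁
  rcases l₂ with _ | ⟨b, l₂⟩; · exact absurd rfl h₂
  exact List.Lex.rel h

lemma cons_lt_cons_self {a : X} {l₁ l₂ : List X} (h : l₁ < l₂) : a :: l₁ < a :: l₂ :=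
  List.Lex.cons h

lemma append_lt_append_right {l₁ l₂ : List X} (h : l₁.length = l₂.length) (hlt : l₁ < l₂)
    (s : List X) : l₁ ++ s < l₂ ++ s := by
  induction l₁ generalizing l₂ with
  | nil =>
      rcases l₂ with _ | ⟨b, l₂⟩
      · exact absurd hlt (lt_irrefl _)
      · simp at h
  | cons a l₁ ih =>
      rcases l₂ with _ | ⟨b, l₂⟩
      · simp at h
      · have hlt' : List.Lex (· < ·) (a :: l₁) (b :: l₂) := hlt
        cases hlt' with
        | cons h' => exact List.Lex.cons (ih (by simpa using h) h')
        | rel h' => exact List.Lex.rel h'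



lemma cons_eq_append_of_all_eq {l : List X} {y : X} (h : ∀ x ∈ l, x = y) :
    y :: l = l ++ [y] := by
  induction l with
  | nil => rfl
  | cons z l ih =>
      have hz := h z (by simp)
      subst hz
      simp only [List.cons_append]
      exact congrArg _ (ih fun x hx => h x (by simp [hx]))

lemma splits_mem_sub : ∀ (u : List X), ∀ p ∈ splits u,
    (∀ x ∈ p.1, x ∈ u) ∧ (∀ x ∈ p.2, x ∈ u)
  | [], p, hp => by simp [splits] at hp; simp [hp]
  | x :: u, p, hp => by
      simp only [splits, mem_append, mem_map] at hp
      rcases hp with ⟨q, hq, rfl⟩ | ⟨q, hq, rfl⟩ <;>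
        obtain ⟨h1, h2⟩ := splits_mem_sub u q hq
      · constructor
        · intro z hz
          rcases mem_cons.1 hz with rfl | hz
          · exact mem_cons_self
          · exact mem_cons_of_mem _ (h1 z hz)
        · exact fun z hz => mem_cons_of_mem _ (h2 z hz)
      · constructor
        · exact fun z hz => mem_cons_of_mem _ (h1 z hz)
        · intro z hz
          rcases mem_cons.1 hz with rfl | hz
          · exact mem_cons_self
          · exact mem_cons_of_mem _ (h2 z hz)

lemma mw_cons_pos {u : List X} {a y : X} (h : a ≤ y) :
    mw (y :: u) a = y :: mw u a := by
  simp [mw, List.takeWhile_cons, List.dropWhile_cons, h]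

lemma mw_cons_neg {u : List X} {a y : X} (h : ¬ a ≤ y) :
    mw (y :: u) a = a :: (u.reverse ++ [y]) := by
  simp [mw, List.takeWhile_cons, List.dropWhile_cons, h]

/-- The key strict inequality. -/
lemma key_lt (a : X) : ∀ (u : List X) (q : List X) (hune : u ≠ [])
    (_ : Chain' (fun x y => y ≤ x) u) (_ : u.getLast hune < a)
    (_ : q ≠ []) (_ : Chain' (fun x y => y ≤ x) q) (_ : ∀ x ∈ q, a ≤ x)
    (_ : ∀ x ∈ q, u.head hune ≤ x),
    ∀ p ∈ splits u, sw a p ++ q.reverse < q ++ mw u a := by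
  intro u
  induction u with
  | nil => intro q h; exact absurd rfl h
  | cons y u' ih =>
    intro q _ hu hlast hqne hq hqa hqh p hp
    rcases q with _ | ⟨c, q₀⟩
    · exact absurd rfl hqne
    have hac : a ≤ c := hqa c (by simp)
    have hyc : y ≤ c := hqh c (by simp)
    simp only [List.head_cons] at hqh
    have hq₀mem : ∀ x ∈ q₀, x ∈ c :: q₀ := fun x hx => mem_cons_of_mem _ hx
    simp only [splits, mem_append, mem_map] at hp
    rcases u' with _ | ⟨z, u''⟩
    · -- base case u = [y]
      have hya : y < a := by simpa using hlast
      rcases hp with ⟨⟨s', t'⟩, hq', rfl⟩ | ⟨⟨s', t'⟩, hq', rfl⟩ <;>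
        simp only [splits, mem_singleton, Prod.mk.injEq] at hq'
      · obtain ⟨rfl, rfl⟩ := hq'
        -- word = [y, a] ++ q.reverse < (c::q₀) ++ [a, y]
        show (y :: [a]) ++ (c :: q₀).reverse < c :: (q₀ ++ mw [y] a)
        exact List.Lex.rel (lt_of_lt_of_le hya hac)
      · obtain ⟨rfl, rfl⟩ := hq'
        show (a :: ([y] ++ (c :: q₀).reverse)) < c :: (q₀ ++ mw [y] a)
        have hmw : mw [y] a = [a, y] := by
          simp [mw, List.takeWhile_cons, List.dropWhile_cons, hya.not_ge]
        rcases lt_or_eq_of_le hac with hlt | rfl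
        · exact List.Lex.rel hlt
        · apply List.Lex.cons
          rcases q₀ with _ | ⟨c', q₀'⟩
          · rw [hmw]; exact List.Lex.rel hya
          · exact List.Lex.rel (lt_of_lt_of_le hya (hqa c' (by simp)))
    · -- inductive case, u = y :: u' with u' = z :: u'' nonempty
      set u' := z :: u'' with hu'def
      have hu'ne : u' ≠ [] := by simp [hu'def]
      have hchain' : Chain' (fun x y => y ≤ x) u' := hu.tail
      have hlast' : u'.getLast hu'ne < a := by
        rwa [List.getLast_cons hu'ne] at hlast
      have hyu' : ∀ x ∈ u', x ≤ y := by
        intro x hx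
        exact mem_le_head hu (mem_cons_of_mem _ hx) (by simp)
      have hheadu' : u'.head hu'ne ≤ y := hyu' _ (List.head_mem hu'ne)
      rcases le_or_gt a y with hay | hya
      · -- case B : a ≤ y, mw u a = y :: mw u' a
        have hmw := mw_cons_pos (u := u') hay
        rcases hp with ⟨⟨s', t'⟩, hq', rfl⟩ | ⟨⟨s', t'⟩, hq', rfl⟩
        · -- B1
          show (y :: (sw a (s', t') ++ (c :: q₀).reverse)) < (c :: q₀) ++ mw (y :: u') a
          rcases lt_or_eq_of_le hyc with hlt | rfl
          · exact List.Lex.rel hlt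
          · -- y = c ; all elements of q are equal to y
            have hqall : ∀ x ∈ y :: q₀, x = y := by
              intro x hx
              exact le_antisymm (mem_le_head hq hx (by simp)) (hqh x hx)
            have hq₀all : ∀ x ∈ q₀, x = y := fun x hx => hqall x (by simp [hx])
            rw [hmw]
            apply List.Lex.cons
            have h1 : y :: q₀ = q₀ ++ [y] := cons_eq_append_of_all_eq hq₀all
            have hIH := ih (y :: q₀) hu'ne hchain' hlast' (by simp) hq hqa
              (fun x hx => le_trans hheadu' (hqh x hx)) (s', t') hq'
            have h2 : q₀ ++ (y :: mw u' a) = (y :: q₀) ++ mw u' a := by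
              rw [h1, List.append_assoc]; rfl
            show sw a (s', t') ++ (y :: q₀).reverse < q₀ ++ (y :: mw u' a)
            rw [h2]
            exact hIH
        · -- B2
          have hqy_ne : (c :: q₀) ++ [y] ≠ [] := by simp
          have hqy_chain : Chain' (fun x y => y ≤ x) ((c :: q₀) ++ [y]) := by
            rw [List.Chain', List.isChain_append]
            refine ⟨hq, by simp, ?_⟩
            intro x hx w hw
            simp only [List.head?_cons, Option.mem_def, Option.some.injEq] at hw
            subst hw
            exact hqh x (List.mem_of_mem_getLast? hx)
          have hqy_a : ∀ x ∈ (c :: q₀) ++ [y], a ≤ x := by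
            intro x hx
            rcases List.mem_append.1 hx with hx | hx
            · exact hqa x hx
            · simp only [List.mem_singleton] at hx; subst hx; exact hay
          have hqy_h : ∀ x ∈ (c :: q₀) ++ [y], u'.head hu'ne ≤ x := by
            intro x hx
            rcases List.mem_append.1 hx with hx | hx
            · exact le_trans hheadu' (hqh x hx)
            · simp only [List.mem_singleton] at hx; subst hx; exact hheadu'
          have hIH := ih ((c :: q₀) ++ [y]) hu'ne hchain' hlast' hqy_ne hqy_chain
            hqy_a hqy_h (s', t') hq'
          rw [hmw]
          have e1 : sw a (s', y :: t') ++ (c :: q₀).reverse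
              = sw a (s', t') ++ ((c :: q₀) ++ [y]).reverse := by
            simp [sw, List.append_assoc]
          have e2 : (c :: q₀) ++ (y :: mw u' a) = ((c :: q₀) ++ [y]) ++ mw u' a := by
            simp [List.append_assoc]
          rw [e1, e2]
          exact hIH
      · -- case A : y < a
        have hmw := mw_cons_neg (u := u') hya.not_ge
        rcases hp with ⟨⟨s', t'⟩, hq', rfl⟩ | ⟨⟨s', t'⟩, hq', rfl⟩
        · -- A1
          show (y :: (sw a (s', t') ++ (c :: q₀).reverse)) < (c :: q₀) ++ mw (y :: u') a
          exact List.Lex.rel (lt_of_lt_of_le hya hac)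
        · -- A2
          rw [hmw]
          rcases s' with _ | ⟨z', s''⟩
          · -- s' empty
            show a :: ((y :: t').reverse ++ (c :: q₀).reverse)
                < c :: (q₀ ++ (a :: (u'.reverse ++ [y])))
            rcases lt_or_eq_of_le hac with hlt | rfl
            · exact List.Lex.rel hlt
            · apply List.Lex.cons
              have hLne : (y :: t').reverse ++ (a :: q₀).reverse ≠ [] := by simp
              have hRne : q₀ ++ (a :: (u'.reverse ++ [y])) ≠ [] := by simp
              apply lt_of_head_lt hLne hRne
              have hLhead : ((y :: t').reverse ++ (a :: q₀).reverse).head hLne < a := by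
                rw [List.head_append_left (by simp)]
                rw [List.head_reverse]
                have hmem : (y :: t').getLast (by simp) ∈ y :: t' := List.getLast_mem _
                rcases List.mem_cons.1 hmem with he | he
                · rw [he]; exact hya
                · exact lt_of_le_of_lt
                    (hyu' _ ((splits_mem_sub u' ([], t') hq').2 _ he)) hya
                    |>.trans_le le_rfl
              rcases q₀ with _ | ⟨c', q₀'⟩
              · simpa using hLhead
              · refine lt_of_lt_of_le hLhead ?_
                rw [List.head_append_left (by simp)]
                exact hqa c' (by simp)
          · -- s' = z' :: s''
            show z' :: ((s'' ++ a :: (y :: t').reverse) ++ (c :: q₀).reverse)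
                < c :: (q₀ ++ (a :: (u'.reverse ++ [y])))
            have hz' : z' ∈ u' := (splits_mem_sub u' (z' :: s'', t') hq').1 _ (by simp)
            exact List.Lex.rel (lt_of_lt_of_le (lt_of_le_of_lt (hyu' _ hz') hya) hac)



lemma append_le_append_right {l₁ l₂ : List X} (h : l₁.length = l₂.length) (hle : l₁ ≤ l₂)
    (s : List X) : l₁ ++ s ≤ l₂ ++ s := by
  rcases lt_or_eq_of_le hle with hlt | rfl
  · exact le_of_lt (append_lt_append_right h hlt s)
  · exact le_rfl

lemma length_mw (u : List X) (a : X) : (mw u a).length = u.length + 1 := by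
  have h := congrArg List.length
    (List.takeWhile_append_dropWhile (p := fun x => decide (a ≤ x)) (l := u))
  simp only [List.length_append] at h
  simp only [mw, List.length_append, List.length_cons, List.length_reverse]
  omega

lemma dropWhile_all_lt {u : List X} {a : X} (hu : Chain' (fun x y => y ≤ x) u) :
    ∀ x ∈ u.dropWhile (fun x => a ≤ x), x < a := by
  intro x hx
  have hne : u.dropWhile (fun x => a ≤ x) ≠ [] := List.ne_nil_of_mem hx
  have hchain : Chain' (fun x y => y ≤ x) (u.dropWhile (fun x => a ≤ x)) := by
    haveI : IsTrans X (fun a b : X => b ≤ a) := ⟨fun _ _ _ h h' => le_trans h' h⟩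
    exact hu.sublist (List.dropWhile_sublist _)
  have hhead := List.head_dropWhile_not (fun x => a ≤ x) (l := u) hne
  have hxle := mem_le_head hchain hx hne
  simp only [decide_eq_false_iff_not, not_le] at hhead
  exact lt_of_le_of_lt hxle hhead

lemma takeWhile_all_ge {u : List X} {a : X} :
    ∀ x ∈ u.takeWhile (fun x => a ≤ x), a ≤ x := by
  intro x hx
  simpa using List.mem_takeWhile_imp hx

/-- The `≤` lemma with equality characterization. -/
lemma sw_le_mw (a : X) : ∀ (u : List X) (hune : u ≠ [])
    (_ : Chain' (fun x y => y ≤ x) u) (_ : u.getLast hune < a),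
    ∀ p ∈ splits u, sw a p ≤ mw u a ∧
      (sw a p = mw u a →
        p = (u.takeWhile (fun x => a ≤ x), u.dropWhile (fun x => a ≤ x))) := by
  intro u
  induction u with
  | nil => intro h; exact absurd rfl h
  | cons y u' ih =>
    intro _ hu hlast p hp
    simp only [splits, mem_append, mem_map] at hp
    rcases u' with _ | ⟨z, u''⟩
    · -- base case u = [y]
      have hya : y < a := by simpa using hlast
      have htw : List.takeWhile (fun x => a ≤ x) [y] = [] := by
        simp [List.takeWhile_cons, hya.not_ge]
      have hdw : List.dropWhile (fun x => a ≤ x) [y] = [y] := by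
        simp [List.dropWhile_cons, hya.not_ge]
      have hmw : mw [y] a = [a, y] := by simp [mw, htw, hdw]
      rcases hp with ⟨⟨s', t'⟩, hq', rfl⟩ | ⟨⟨s', t'⟩, hq', rfl⟩ <;>
        simp only [splits, mem_singleton, Prod.mk.injEq] at hq'
      · obtain ⟨rfl, rfl⟩ := hq'
        constructor
        · rw [hmw]
          exact le_of_lt (List.Lex.rel hya)
        · intro he
          rw [hmw] at he
          simp [sw] at he
          exact absurd he.1 hya.ne
      · obtain ⟨rfl, rfl⟩ := hq'
        constructor
        · rw [hmw]; show [a, y] ≤ [a, y]; exact le_rfl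
        · intro _; rw [htw, hdw]
      
    · set u' := z :: u'' with hu'def
      have hu'ne : u' ≠ [] := by simp [hu'def]
      have hchain' : Chain' (fun x y => y ≤ x) u' := hu.tail
      have hlast' : u'.getLast hu'ne < a := by
        rwa [List.getLast_cons hu'ne] at hlast
      have hyu' : ∀ x ∈ u', x ≤ y := fun x hx =>
        mem_le_head hu (mem_cons_of_mem _ hx) (by simp)
      have hheadu' : u'.head hu'ne ≤ y := hyu' _ (List.head_mem hu'ne)
      rcases le_or_gt a y with hay | hya
      · -- case a ≤ y
        have htw : List.takeWhile (fun x => a ≤ x) (y :: u')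
            = y :: List.takeWhile (fun x => a ≤ x) u' := by
          simp [List.takeWhile_cons, hay]
        have hdw : List.dropWhile (fun x => a ≤ x) (y :: u')
            = List.dropWhile (fun x => a ≤ x) u' := by
          simp [List.dropWhile_cons, hay]
        have hmw := mw_cons_pos (u := u') hay
        rcases hp with ⟨⟨s', t'⟩, hq', rfl⟩ | ⟨⟨s', t'⟩, hq', rfl⟩
        · obtain ⟨hle, heq⟩ := ih hu'ne hchain' hlast' (s', t') hq'
          constructor
          · rw [hmw]
            show y :: (sw a (s', t')) ≤ y :: mw u' a
            rcases lt_or_eq_of_le hle with hlt | he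
            · exact le_of_lt (List.Lex.cons hlt)
            · rw [he]
          · intro he
            rw [hmw] at he
            have : sw a (s', t') = mw u' a := by
              have : y :: sw a (s', t') = y :: mw u' a := he
              exact (List.cons_injective.eq_iff).1 this
            have hp' := heq this
            rw [htw, hdw]
            simp only [Prod.mk.injEq] at hp' ⊢
            exact ⟨by rw [hp'.1], hp'.2⟩
        · -- strict via key_lt
          have hkey := key_lt a u' [y] hu'ne hchain' hlast' (by simp) (by simp [List.Chain'])
            (by simpa using hay) (by simpa using hheadu') (s', t') hq'
          have he1 : sw a (s', t') ++ [y].reverse = sw a (s', y :: t') := by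
            simp [sw, List.append_assoc]
          have he2 : [y] ++ mw u' a = mw (y :: u') a := by
            rw [hmw]; rfl
          rw [he1, he2] at hkey
          exact ⟨le_of_lt hkey, fun he => absurd he (ne_of_lt hkey)⟩
      · -- case y < a
        have htw : List.takeWhile (fun x => a ≤ x) (y :: u') = [] := by
          simp [List.takeWhile_cons, hya.not_ge]
        have hdw : List.dropWhile (fun x => a ≤ x) (y :: u') = y :: u' := by
          simp [List.dropWhile_cons, hya.not_ge]
        have htw' : List.takeWhile (fun x => a ≤ x) u' = [] := by
          rw [hu'def]
          simp [List.takeWhile_cons, (lt_of_le_of_lt (hyu' z (by simp [hu'def])) hya).not_ge]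
        have hdw' : List.dropWhile (fun x => a ≤ x) u' = u' := by
          rw [hu'def]
          simp [List.dropWhile_cons, (lt_of_le_of_lt (hyu' z (by simp [hu'def])) hya).not_ge]
        have hmw : mw (y :: u') a = mw u' a ++ [y] := by
          simp [mw, htw, hdw, htw', hdw']
        rcases hp with ⟨⟨s', t'⟩, hq', rfl⟩ | ⟨⟨s', t'⟩, hq', rfl⟩
        · constructor
          · rw [hmw, mw, htw', hdw']
            show y :: (sw a (s', t')) ≤ (a :: u'.reverse) ++ [y]
            exact le_of_lt (List.Lex.rel hya)
          · intro he
            rw [hmw, mw, htw', hdw'] at he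
            have : y = a := by
              have := congrArg (fun l => l.head?) he
              simpa [sw] using this
            exact absurd this hya.ne
        · obtain ⟨hle, heq⟩ := ih hu'ne hchain' hlast' (s', t') hq'
          have hlen : (sw a (s', t')).length = (mw u' a).length := by
            rw [length_mw]
            have hsl : s'.length + t'.length = u'.length := splits_length u' (s', t') hq'
            simp [sw]
            omega
          constructor
          · rw [hmw]
            have he1 : sw a (s', y :: t') = sw a (s', t') ++ [y] := by
              simp [sw, List.append_assoc]
            rw [he1]
            exact append_le_append_right hlen hle _
          · intro he
            rw [hmw] at he
            have he1 : sw a (s', y :: t') = sw a (s', t') ++ [y] := by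
              simp [sw, List.append_assoc]
            rw [he1] at he
            have he2 : sw a (s', t') = mw u' a := by
              exact List.append_cancel_right he
            have hp' := heq he2
            rw [htw', hdw'] at hp'
            rw [htw, hdw]
            simp only [Prod.mk.injEq] at hp' ⊢
            exact ⟨hp'.1, by rw [hp'.2]⟩




lemma diag_sum {M : Type*} [AddCommMonoid M] (a : X) (c : M) :
    ∀ (u : List X), Chain' (fun x y => y ≤ x) u →
    ((splits u).map (fun p =>
      if p = (u.takeWhile (fun x => a ≤ x), u.dropWhile (fun x => a ≤ x)) then c
      else 0)).sum = c := by
  intro u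
  induction u with
  | nil => simp [splits]
  | cons y u' ih =>
    intro hu
    have hchain' : Chain' (fun x y => y ≤ x) u' := hu.tail
    show (((splits u').map (fun p => (y :: p.1, p.2))
        ++ (splits u').map (fun p => (p.1, y :: p.2))).map _).sum = c
    rw [List.map_append, List.sum_append, List.map_map, List.map_map]
    rcases le_or_gt a y with hay | hya
    · have htw : List.takeWhile (fun x => a ≤ x) (y :: u')
          = y :: List.takeWhile (fun x => a ≤ x) u' := by
        simp [List.takeWhile_cons, hay]
      have hdw : List.dropWhile (fun x => a ≤ x) (y :: u')
          = List.dropWhile (fun x => a ≤ x) u' := by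
        simp [List.dropWhile_cons, hay]
      rw [htw, hdw]
      have h1 : ((splits u').map
          ((fun p => if p = (y :: List.takeWhile (fun x => a ≤ x) u',
              List.dropWhile (fun x => a ≤ x) u') then c else 0)
            ∘ (fun p : List X × List X => (y :: p.1, p.2)))).sum = c := by
        have hfe : ((fun p => if p = (y :: List.takeWhile (fun x => a ≤ x) u',
              List.dropWhile (fun x => a ≤ x) u') then c else 0)
            ∘ (fun p : List X × List X => (y :: p.1, p.2)))
            = fun p => if p = (List.takeWhile (fun x => a ≤ x) u',
              List.dropWhile (fun x => a ≤ x) u') then c else 0 := by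
          funext p
          simp [Function.comp, Prod.ext_iff]
        rw [hfe]
        exact ih hchain'
      have h2 : ((splits u').map
          ((fun p => if p = (y :: List.takeWhile (fun x => a ≤ x) u',
              List.dropWhile (fun x => a ≤ x) u') then c else 0)
            ∘ (fun p : List X × List X => (p.1, y :: p.2)))).sum = 0 := by
        apply List.sum_eq_zero
        intro x hx
        rcases List.mem_map.1 hx with ⟨p, _, rfl⟩
        simp only [Function.comp]
        rw [if_neg]
        intro he
        simp only [Prod.mk.injEq] at he
        have : y ∈ List.dropWhile (fun x => a ≤ x) u' := by rw [← he.2]; simp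
        exact absurd hay (dropWhile_all_lt hchain' y this).not_ge
      rw [h1, h2, add_zero]
    · have htw : List.takeWhile (fun x => a ≤ x) (y :: u') = [] := by
        simp [List.takeWhile_cons, hya.not_ge]
      have hdw : List.dropWhile (fun x => a ≤ x) (y :: u') = y :: u' := by
        simp [List.dropWhile_cons, hya.not_ge]
      have htw' : List.takeWhile (fun x => a ≤ x) u' = [] := by
        rcases u' with _ | ⟨z, u''⟩
        · rfl
        · exact by
            have hz : z ≤ y := (List.isChain_cons_cons.1 hu).1
            simp [List.takeWhile_cons, (lt_of_le_of_lt hz hya).not_ge]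
      have hdw' : List.dropWhile (fun x => a ≤ x) u' = u' := by
        rcases u' with _ | ⟨z, u''⟩
        · rfl
        · exact by
            have hz : z ≤ y := (List.isChain_cons_cons.1 hu).1
            simp [List.dropWhile_cons, (lt_of_le_of_lt hz hya).not_ge]
      rw [htw, hdw]
      have h1 : ((splits u').map
          ((fun p => if p = (([] : List X), y :: u') then c else 0)
            ∘ (fun p : List X × List X => (y :: p.1, p.2)))).sum = 0 := by
        apply List.sum_eq_zero
        intro x hx
        rcases List.mem_map.1 hx with ⟨p, _, rfl⟩
        simp only [Function.comp]
        rw [if_neg]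
        intro he
        simp only [Prod.mk.injEq] at he
        exact List.cons_ne_nil _ _ he.1
      have h2 : ((splits u').map
          ((fun p => if p = (([] : List X), y :: u') then c else 0)
            ∘ (fun p : List X × List X => (p.1, y :: p.2)))).sum = c := by
        have hfe : ((fun p => if p = (([] : List X), y :: u') then c else 0)
            ∘ (fun p : List X × List X => (p.1, y :: p.2)))
            = fun p => if p = (([] : List X), u') then c else 0 := by
          funext p
          simp [Function.comp, Prod.ext_iff]
        rw [hfe]
        have := ih hchain'
        rwa [htw', hdw'] at this
      rw [h1, h2, zero_add]



instance freeMonoidDecEq {Y : Type*} [DecidableEq Y] : DecidableEq (FreeMonoid Y) :=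
  inferInstanceAs (DecidableEq (List Y))

section Algebra

variable (k : Type*) [CommRing k]

/-- Iterated right-normed commutator in the monoid algebra. -/
noncomputable def mB : List X → MonoidAlgebra k (FreeMonoid X)
  | [] => 0
  | [i] => MonoidAlgebra.single (FreeMonoid.of i) 1
  | i :: j :: l => MonoidAlgebra.single (FreeMonoid.of i) 1 * mB (j :: l)
      - mB (j :: l) * MonoidAlgebra.single (FreeMonoid.of i) 1

lemma mB_cons {l : List X} (h : l ≠ []) (i : X) :
    mB k (i :: l) = MonoidAlgebra.single (FreeMonoid.of i) 1 * mB k l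
      - mB k l * MonoidAlgebra.single (FreeMonoid.of i) 1 := by
  rcases l with _ | ⟨j, l⟩
  · exact absurd rfl h
  · rfl

lemma list_sum_map_neg {R : Type*} [Ring R] {ι : Type*} (l : List ι) (f : ι → R) :
    (l.map (fun x => - f x)).sum = - (l.map f).sum := by
  induction l with
  | nil => simp
  | cons x l ih => simp [ih]; abel

lemma mB_expand : ∀ (u : List X) (a : X),
    mB k (u ++ [a]) = ((splits u).map (fun p =>
      MonoidAlgebra.single (FreeMonoid.ofList (sw a p)) ((-1 : k) ^ p.2.length))).sum := by
  intro u
  induction u with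
  | nil =>
    intro a
    simp [splits, sw, mB, FreeMonoid.ofList_singleton]
  | cons y u' ih =>
    intro a
    have hne : u' ++ [a] ≠ [] := by simp
    rw [List.cons_append, mB_cons k hne, ih]
    show _ = (((splits u').map (fun p => (y :: p.1, p.2))
        ++ (splits u').map (fun p => (p.1, y :: p.2))).map _).sum
    rw [List.map_append, List.sum_append, List.map_map, List.map_map]
    have h1 : ((splits u').map
        ((fun p : List X × List X => MonoidAlgebra.single
            (FreeMonoid.ofList (sw a p)) ((-1 : k) ^ p.2.length))
          ∘ (fun p : List X × List X => (y :: p.1, p.2)))).sum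
        = MonoidAlgebra.single (FreeMonoid.of y) (1 : k)
          * ((splits u').map (fun p => MonoidAlgebra.single
              (FreeMonoid.ofList (sw a p)) ((-1 : k) ^ p.2.length))).sum := by
      rw [← List.sum_map_mul_left]
      congr 1
      apply List.map_congr_left
      intro p _
      simp only [Function.comp]
      rw [MonoidAlgebra.single_mul_single, one_mul]
      have hw : FreeMonoid.ofList (sw a (y :: p.1, p.2))
          = FreeMonoid.of y * FreeMonoid.ofList (sw a p) := by
        have : sw a (y :: p.1, p.2) = [y] ++ sw a p := by simp [sw]
        rw [this, FreeMonoid.ofList_append, FreeMonoid.ofList_singleton]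
      rw [hw]
    have h2 : ((splits u').map
        ((fun p : List X × List X => MonoidAlgebra.single
            (FreeMonoid.ofList (sw a p)) ((-1 : k) ^ p.2.length))
          ∘ (fun p : List X × List X => (p.1, y :: p.2)))).sum
        = - (((splits u').map (fun p => MonoidAlgebra.single
              (FreeMonoid.ofList (sw a p)) ((-1 : k) ^ p.2.length))).sum
            * MonoidAlgebra.single (FreeMonoid.of y) (1 : k)) := by
      rw [← List.sum_map_mul_right, ← list_sum_map_neg]
      congr 1
      apply List.map_congr_left
      intro p _
      simp only [Function.comp]
      rw [MonoidAlgebra.single_mul_single, mul_one]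
      have hw : FreeMonoid.ofList (sw a (p.1, y :: p.2))
          = FreeMonoid.ofList (sw a p) * FreeMonoid.of y := by
        have : sw a (p.1, y :: p.2) = sw a p ++ [y] := by
          simp [sw, List.append_assoc]
        rw [this, FreeMonoid.ofList_append, FreeMonoid.ofList_singleton]
      rw [hw, List.length_cons, pow_succ, mul_neg_one]
      exact MonoidAlgebra.single_neg _ _
    rw [h1, h2, sub_eq_add_neg]



lemma mB_apply (u : List X) (a : X) (w : FreeMonoid X) :
    (mB k (u ++ [a])).coeff w = ((splits u).map (fun p =>
      if FreeMonoid.ofList (sw a p) = w then ((-1 : k) ^ p.2.length) else 0)).sum := by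
  rw [mB_expand]
  have h := map_list_sum ((Finsupp.applyAddHom (M := k) w).comp MonoidAlgebra.coeffAddEquiv.toAddMonoidHom)
      ((splits u).map (fun p =>
        MonoidAlgebra.single (FreeMonoid.ofList (sw a p)) ((-1 : k) ^ p.2.length)))
  rw [List.map_map] at h
  refine h.trans ?_
  apply congrArg List.sum
  apply List.map_congr_left
  intro p _
  show (MonoidAlgebra.single (FreeMonoid.ofList (sw a p)) ((-1 : k) ^ p.2.length)).coeff w = _
  exact Finsupp.single_apply

lemma mB_support_le (u : List X) (a : X) (w : FreeMonoid X)
    (h : (mB k (u ++ [a])).coeff w ≠ 0) :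
    ∃ p ∈ splits u, FreeMonoid.ofList (sw a p) = w := by
  by_contra hc
  push_neg at hc
  apply h
  rw [mB_apply]
  apply List.sum_eq_zero
  intro x hx
  rcases List.mem_map.1 hx with ⟨p, hp, rfl⟩
  rw [if_neg (hc p hp)]

lemma mB_diag (u : List X) (a : X) (hune : u ≠ [])
    (hu : Chain' (fun x y => y ≤ x) u) (hlast : u.getLast hune < a) :
    (mB k (u ++ [a])).coeff (FreeMonoid.ofList (mw u a))
      = (-1 : k) ^ (u.dropWhile (fun x => a ≤ x)).length := by
  rw [mB_apply]
  have hswm : sw a (u.takeWhile (fun x => a ≤ x), u.dropWhile (fun x => a ≤ x))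
      = mw u a := rfl
  have hfun : ∀ p ∈ splits u,
      (if FreeMonoid.ofList (sw a p) = FreeMonoid.ofList (mw u a)
        then ((-1 : k) ^ p.2.length) else 0)
      = (if p = (u.takeWhile (fun x => a ≤ x), u.dropWhile (fun x => a ≤ x))
        then ((-1 : k) ^ (u.dropWhile (fun x => a ≤ x)).length) else 0) := by
    intro p hp
    by_cases hcond : FreeMonoid.ofList (sw a p) = FreeMonoid.ofList (mw u a)
    · have hswe : sw a p = mw u a := FreeMonoid.ofList.injective hcond
      have hpe := (sw_le_mw a u hune hu hlast p hp).2 hswe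
      rw [if_pos hcond, if_pos hpe, hpe]
    · rw [if_neg hcond, if_neg]
      intro hpe
      exact hcond (by rw [hpe, hswm])
  rw [List.map_congr_left hfun]
  exact diag_sum a _ u hu

end Algebra

lemma takeWhile_append_all {p : X → Bool} :
    ∀ {l₁ l₂ : List X}, (∀ x ∈ l₁, p x = true) →
      List.takeWhile p (l₁ ++ l₂) = l₁ ++ List.takeWhile p l₂ := by
  intro l₁
  induction l₁ with
  | nil => intro l₂ _; simp
  | cons x l ih =>
    intro l₂ h
    rw [List.cons_append, List.takeWhile_cons, if_pos (h x (by simp))]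
    rw [ih (fun y hy => h y (by simp [hy])), List.cons_append]

lemma dropWhile_ne_nil_of_valid {u : List X} {a : X} (hune : u ≠ [])
    (hlast : u.getLast hune < a) : u.dropWhile (fun x => a ≤ x) ≠ [] := by
  intro h
  have htw : u.takeWhile (fun x => a ≤ x) = u := by
    conv_rhs => rw [← List.takeWhile_append_dropWhile (p := fun x => decide (a ≤ x)) (l := u)]
    rw [h, List.append_nil]
  have hmem : u.getLast hune ∈ u.takeWhile (fun x => a ≤ x) := by
    rw [htw]; exact List.getLast_mem hune
  have := List.mem_takeWhile_imp hmem
  simp only [decide_eq_true_eq] at this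
  exact absurd this hlast.not_ge

lemma getLast_eq_of_eq {l l' : List X} (h : l = l') (h' : l ≠ []) :
    l.getLast h' = l'.getLast (h ▸ h') := by subst h; rfl

lemma mw_components {u : List X} {a : X} (hune : u ≠ [])
    (hu : Chain' (fun x y => y ≤ x) u) (hlast : u.getLast hune < a) :
    ∃ (hmne : mw u a ≠ []),
      ((mw u a).takeWhile (fun x => (mw u a).getLast hmne < x)
          = u.takeWhile (fun x => a ≤ x) ++ [a]) ∧
      ((mw u a).dropWhile (fun x => (mw u a).getLast hmne < x)
          = (u.dropWhile (fun x => a ≤ x)).reverse) := by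
  set tw := u.takeWhile (fun x => a ≤ x) with htwdef
  set dw := u.dropWhile (fun x => a ≤ x) with hdwdef
  have hdwne : dw ≠ [] := dropWhile_ne_nil_of_valid hune hlast
  have hdwrevne : dw.reverse ≠ [] := by simpa using hdwne
  set c := dw.head hdwne with hcdef
  have hca : c < a := by
    have := List.head_dropWhile_not (fun x => decide (a ≤ x)) (l := u) hdwne
    simp only [decide_eq_false_iff_not, not_le] at this
    exact this
  have hdwchain : Chain' (fun x y => y ≤ x) dw := by
    haveI : IsTrans X (fun a b : X => b ≤ a) := ⟨fun _ _ _ h h' => le_trans h' h⟩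
    exact hu.sublist (List.dropWhile_sublist _)
  have hdwle : ∀ x ∈ dw, x ≤ c := fun x hx => mem_le_head hdwchain hx hdwne
  have hsplit : mw u a = (tw ++ [a]) ++ dw.reverse := by
    simp [mw, List.append_assoc, ← htwdef, ← hdwdef]
  have hmne : mw u a ≠ [] := by rw [hsplit]; simp
  have hlastmw : (mw u a).getLast hmne = c := by
    rw [getLast_eq_of_eq hsplit hmne]
    rw [List.getLast_append]
    simp only [List.isEmpty_iff]
    rw [dif_neg hdwrevne]
    rw [List.getLast_reverse]
  have htake : (mw u a).takeWhile (fun x => c < x) = tw ++ [a] := by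
    rw [hsplit]
    rw [takeWhile_append_all (p := fun x => decide (c < x)) ?_]
    · have hz : List.takeWhile (fun x => decide (c < x)) dw.reverse = [] := by
        rcases hrev : dw.reverse with _ | ⟨c', rest⟩
        · rfl
        · have hc' : c' = dw.getLast hdwne := by
            have h1 : dw.reverse.head? = some c' := by rw [hrev]; rfl
            have h2 : dw.reverse.head? = some (dw.reverse.head hdwrevne) :=
              List.head?_eq_head _
            have h3 := Option.some.inj (h1.symm.trans h2)
            rw [h3, List.head_reverse]
          have hc'le : c' ≤ c := by
            rw [hc']
            exact hdwle _ (List.getLast_mem hdwne)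
          rw [List.takeWhile_cons, if_neg (by simp [hc'le.not_gt])]
      rw [hz, List.append_nil]
    · intro x hx
      rcases List.mem_append.1 hx with hx | hx
      · have := List.mem_takeWhile_imp hx
        simp only [decide_eq_true_eq] at this
        simp [lt_of_lt_of_le hca this]
      · simp only [List.mem_singleton] at hx
        subst hx
        simp [hca]
  have hdrop : (mw u a).dropWhile (fun x => c < x) = dw.reverse := by
    have h1 := List.takeWhile_append_dropWhile (p := fun x => decide (c < x)) (l := mw u a)
    rw [htake] at h1
    exact List.append_cancel_left (h1.trans hsplit)
  refine ⟨hmne, ?_, ?_⟩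
  · rw [hlastmw]; exact htake
  · rw [hlastmw]; exact hdrop

lemma mw_inj {u v : List X} {a b : X} (hune : u ≠ []) (hvne : v ≠ [])
    (hu : Chain' (fun x y => y ≤ x) u) (hv : Chain' (fun x y => y ≤ x) v)
    (hlastu : u.getLast hune < a) (hlastv : v.getLast hvne < b)
    (h : mw u a = mw v b) : u = v ∧ a = b := by
  obtain ⟨hmne, htu, hdu⟩ := mw_components hune hu hlastu
  obtain ⟨hmne', htv, hdv⟩ := mw_components hvne hv hlastv
  have hlasteq : (mw u a).getLast hmne = (mw v b).getLast hmne' := by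
    rw [getLast_eq_of_eq h hmne]
  rw [← hlasteq] at htv hdv
  rw [← h] at htv hdv
  have ht : u.takeWhile (fun x => a ≤ x) ++ [a] = v.takeWhile (fun x => b ≤ x) ++ [b] :=
    htu.symm.trans htv
  have hd : (u.dropWhile (fun x => a ≤ x)).reverse
      = (v.dropWhile (fun x => b ≤ x)).reverse := hdu.symm.trans hdv
  have hd' : u.dropWhile (fun x => a ≤ x) = v.dropWhile (fun x => b ≤ x) :=
    List.reverse_injective hd
  have ht' : a = b ∧ u.takeWhile (fun x => a ≤ x) = v.takeWhile (fun x => b ≤ x) := by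
    have := congrArg List.reverse ht
    simp only [List.reverse_append, List.reverse_singleton, List.singleton_append,
      List.cons.injEq] at this
    exact ⟨this.1, List.reverse_injective this.2⟩
  refine ⟨?_, ht'.1⟩
  calc u = u.takeWhile (fun x => a ≤ x) ++ u.dropWhile (fun x => a ≤ x) :=
        (List.takeWhile_append_dropWhile).symm
    _ = v.takeWhile (fun x => b ≤ x) ++ v.dropWhile (fun x => b ≤ x) := by
        rw [ht'.2, hd']
    _ = v := List.takeWhile_append_dropWhile


lemma li_criterion {ι W K M : Type*} [Field K] [AddCommGroup M] [Module K M]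
    [LinearOrder W] (v : ι → M) (coef : W → M →ₗ[K] K) (m : ι → W)
    (hinj : Function.Injective m) (hne : ∀ i, coef (m i) (v i) ≠ 0)
    (hle : ∀ i w, coef w (v i) ≠ 0 → w ≤ m i) :
    LinearIndependent K v := by
  classical
  rw [linearIndependent_iff']
  intro s g hsum i hi
  by_contra hgi
  have hsne : (s.filter fun j => g j ≠ 0).Nonempty :=
    ⟨i, Finset.mem_filter.2 ⟨hi, hgi⟩⟩
  obtain ⟨i0, hi0mem, hi0max⟩ := Finset.exists_max_image _ m hsne
  obtain ⟨hi0s, hgi0⟩ := Finset.mem_filter.1 hi0mem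
  have happ : coef (m i0) (∑ j ∈ s, g j • v j) = 0 := by rw [hsum]; simp
  rw [map_sum] at happ
  have hterm : ∀ j ∈ s, j ≠ i0 → coef (m i0) (g j • v j) = 0 := by
    intro j hj hji
    rw [map_smul, smul_eq_mul]
    by_cases hgj : g j = 0
    · rw [hgj, zero_mul]
    · by_cases hvj : coef (m i0) (v j) = 0
      · rw [hvj, mul_zero]
      · exfalso
        have h1 : m i0 ≤ m j := hle j _ hvj
        have h2 : m j ≤ m i0 := hi0max j (Finset.mem_filter.2 ⟨hj, hgj⟩)
        exact hji (hinj (le_antisymm h2 h1).symm).symm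
  rw [Finset.sum_eq_single i0 hterm (fun h => (h hi0s).elim)] at happ
  rw [map_smul, smul_eq_mul] at happ
  exact hgi0 (by
    rcases mul_eq_zero.1 happ with h | h
    · exact h
    · exact absurd h (hne i0))


section Lie

variable (k : Type*) [CommRing k]

attribute [local instance 100] LieRing.ofAssociativeRing

/-- The canonical Lie algebra morphism to the monoid algebra. -/
noncomputable def phi : FreeLieAlgebra k X →ₗ⁅k⁆ MonoidAlgebra k (FreeMonoid X) :=
  FreeLieAlgebra.lift k (fun x => MonoidAlgebra.single (FreeMonoid.of x) 1)

lemma phi_rnBracket : ∀ (l : List X), phi k (rnBracket k l) = mB k l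
  | [] => by
      show phi k 0 = 0
      exact (phi k).map_zero
  | [i] => by
      show phi k (FreeLieAlgebra.of k i) = MonoidAlgebra.single (FreeMonoid.of i) 1
      exact FreeLieAlgebra.lift_of_apply _ _
  | i :: j :: l => by
      have h1 : rnBracket k (i :: j :: l) = ⁅FreeLieAlgebra.of k i, rnBracket k (j :: l)⁆ := rfl
      rw [h1, LieHom.map_lie, phi_rnBracket (j :: l), Ring.lie_def]
      have h2 : phi k (FreeLieAlgebra.of k i) = MonoidAlgebra.single (FreeMonoid.of i) 1 :=
        FreeLieAlgebra.lift_of_apply _ _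
      rw [h2, mB_cons k (by simp) i]

/-- Coefficient extraction as a linear map. -/
noncomputable def coefMap (w : FreeMonoid X) : MonoidAlgebra k (FreeMonoid X) →ₗ[k] k where
  toFun f := f.coeff w
  map_add' f g := rfl
  map_smul' c f := rfl

end Lie

section Main

variable {n : ℕ}

def uList (p : ReutenauerIndex n) : List (Fin n) :=
  List.ofFn (fun j : Fin (p.1 + 1) => p.2.val j.castSucc)

def aLast (p : ReutenauerIndex n) : Fin n := p.2.val (Fin.last (p.1 + 1))

lemma list_eq (p : ReutenauerIndex n) : List.ofFn p.2.val = uList p ++ [aLast p] := by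
  rw [List.ofFn_succ', List.concat_eq_append]
  rfl

lemma uList_ne (p : ReutenauerIndex n) : uList p ≠ [] := by
  apply List.ne_nil_of_length_pos
  simp [uList]

lemma uList_chain (p : ReutenauerIndex n) :
    Chain' (fun x y : Fin n => y ≤ x) (uList p) := by
  rw [List.Chain', List.isChain_iff_getElem]
  intro t ht
  simp only [uList, List.length_ofFn] at ht
  simp only [uList, List.getElem_ofFn]
  have h := p.2.2.1 ⟨t, by omega⟩ (by simpa using (by omega : t < p.1))
  convert h using 2 <;> exact Fin.ext (by simp)

lemma uList_last (p : ReutenauerIndex n) :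
    (uList p).getLast (uList_ne p) < aLast p := by
  have h0 : (uList p).getLast (uList_ne p)
      = p.2.val (Fin.castSucc (Fin.last p.1)) := by
    rw [getLast_eq_of_eq (show uList p
      = List.ofFn (fun j : Fin (p.1 + 1) => p.2.val j.castSucc) from rfl)]
    rw [List.getLast_ofFn]
    apply congrArg
    exact Fin.ext (by simp)
  rw [h0]
  exact p.2.2.2

end Main

end Stmt19Aux


/- STATEMENT 19: over a field of characteristic zero, with V the vector space
with ordered basis z₁,…,zₙ (so FL(V) = FreeLieAlgebra k (Fin n)), the
right-normed brackets [z_{i₁},[z_{i₂},…[z_{i_{d−1}}, z_{i_d}]…]] with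
i₁ ≥ i₂ ≥ … ≥ i_{d−1} < i_d and d ≥ 2 are linearly independent in FL(V). -/
theorem stmt19 {k : Type*} [Field k] [CharZero k] (n : ℕ) :
    LinearIndependent k
      (fun p : ReutenauerIndex n =>
        rnBracket k (List.ofFn p.2.val) : ReutenauerIndex n → FreeLieAlgebra k (Fin n)) := by
  classical
  letI : LieRing (MonoidAlgebra k (FreeMonoid (Fin n))) := LieRing.ofAssociativeRing
  letI : LinearOrder (FreeMonoid (Fin n)) := inferInstanceAs (LinearOrder (List (Fin n)))
  apply LinearIndependent.of_comp (Stmt19Aux.phi k (X := Fin n)).toLinearMap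
  have hcomp : (⇑(Stmt19Aux.phi k (X := Fin n)).toLinearMap
      ∘ fun p : ReutenauerIndex n => rnBracket k (List.ofFn p.2.val))
      = fun p : ReutenauerIndex n => Stmt19Aux.mB k (Stmt19Aux.uList p ++ [Stmt19Aux.aLast p]) := by
    funext p
    show Stmt19Aux.phi k (rnBracket k (List.ofFn p.2.val)) = _
    rw [Stmt19Aux.phi_rnBracket, Stmt19Aux.list_eq]
  rw [hcomp]
  apply Stmt19Aux.li_criterion
    (v := fun p : ReutenauerIndex n => Stmt19Aux.mB k (Stmt19Aux.uList p ++ [Stmt19Aux.aLast p]))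
    (coef := fun w => Stmt19Aux.coefMap k w)
    (m := fun p => FreeMonoid.ofList (Stmt19Aux.mw (Stmt19Aux.uList p) (Stmt19Aux.aLast p)))
  · -- injectivity
    intro p q h
    have hmw : Stmt19Aux.mw (Stmt19Aux.uList p) (Stmt19Aux.aLast p)
        = Stmt19Aux.mw (Stmt19Aux.uList q) (Stmt19Aux.aLast q) :=
      FreeMonoid.ofList.injective h
    have hlen : p.1 = q.1 := by
      have := congrArg List.length hmw
      rw [Stmt19Aux.length_mw, Stmt19Aux.length_mw] at this
      simp only [Stmt19Aux.uList, List.length_ofFn] at this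
      omega
    obtain ⟨hu, ha⟩ := Stmt19Aux.mw_inj (Stmt19Aux.uList_ne p) (Stmt19Aux.uList_ne q)
      (Stmt19Aux.uList_chain p) (Stmt19Aux.uList_chain q)
      (Stmt19Aux.uList_last p) (Stmt19Aux.uList_last q) hmw
    have hlists : List.ofFn p.2.val = List.ofFn q.2.val := by
      rw [Stmt19Aux.list_eq, Stmt19Aux.list_eq, hu, ha]
    obtain ⟨d, i, hi⟩ := p
    obtain ⟨d', i', hi'⟩ := q
    simp only at hlen
    subst hlen
    simp only at hlists
    have hiv : i = i' := List.ofFn_inj.1 hlists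
    subst hiv
    rfl
  · -- nonzero diagonal
    intro p
    show (Stmt19Aux.mB k _).coeff (FreeMonoid.ofList _) ≠ 0
    rw [Stmt19Aux.mB_diag k _ _ (Stmt19Aux.uList_ne p) (Stmt19Aux.uList_chain p)
      (Stmt19Aux.uList_last p)]
    exact pow_ne_zero _ (neg_ne_zero.2 one_ne_zero)
  · -- support bound
    intro p w hw
    obtain ⟨q, hq, rfl⟩ := Stmt19Aux.mB_support_le k _ _ w hw
    exact (Stmt19Aux.sw_le_mw (Stmt19Aux.aLast p) (Stmt19Aux.uList p) (Stmt19Aux.uList_ne p)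
      (Stmt19Aux.uList_chain p) (Stmt19Aux.uList_last p) q hq).1
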